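/- Let V be a translation invariant valuation on axis-parallel boxes in ℝⁿ such that sup{|V(K)| : K a box contained in the unit ball} < ∞. Then V is continuous with respect to the Hausdorff metric on boxes. -/

import Mathlib

open Filter

/-- An axis-parallel box in `ℝⁿ`. -/
def IsBox {n : ℕ} (S : Set (Fin n → ℝ)) : Prop :=
  ∃ a b : Fin n → ℝ, a ≤ b ∧ S = Set.Icc a b

section aux

lemma cauchy_lin (h : ℝ → ℝ)
    (hadd : ∀ s u : ℝ, 0 ≤ s → 0 ≤ u → h (s + u) = h s + h u)
    (M : ℝ) (hb : ∀ s : ℝ, 0 ≤ s → s ≤ 1 → |h s| ≤ M) :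
    ∀ s : ℝ, 0 ≤ s → h s = s * h 1 := by
  set c := h 1 with hc
  set d : ℝ → ℝ := fun s => h s - s * c with hd
  have dadd : ∀ s u : ℝ, 0 ≤ s → 0 ≤ u → d (s + u) = d s + d u := by
    intro s u hs hu
    simp only [hd, hadd s u hs hu]; ring
  have d1 : d 1 = 0 := by simp [hd, hc]
  have dbase : ∀ s : ℝ, 0 ≤ s → s ≤ 1 → |d s| ≤ M + |c| := by
    intro s hs hs1
    have habs : |d s| ≤ |h s| + |s * c| := by simp only [hd]; exact abs_sub _ _
    have h1 : |h s| ≤ M := hb s hs hs1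
    have h2 : |s * c| ≤ |c| := by
      rw [abs_mul, abs_of_nonneg hs]
      nlinarith [abs_nonneg c]
    linarith
  have dbd : ∀ k : ℕ, ∀ s : ℝ, 0 ≤ s → s ≤ k + 1 → |d s| ≤ M + |c| := by
    intro k
    induction k with
    | zero =>
      intro s hs hs1
      push_cast at hs1
      exact dbase s hs (by linarith)
    | succ k ih =>
      intro s hs hsk
      push_cast at hsk
      by_cases h1 : s ≤ 1
      · exact dbase s hs h1
      · have hs1 : (0:ℝ) ≤ s - 1 := by linarith
        have heq : d s = d (s - 1) := by
          have := dadd (s - 1) 1 hs1 zero_le_one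
          simp only [sub_add_cancel] at this
          rw [this, d1, add_zero]
        rw [heq]
        exact ih (s - 1) hs1 (by linarith)
  have dmul : ∀ k : ℕ, ∀ s : ℝ, 0 ≤ s → d (k * s) = k * d s := by
    intro k
    induction k with
    | zero => intro s hs; have := dadd 0 0 le_rfl le_rfl; simp at this ⊢; linarith
    | succ k ih =>
      intro s hs
      have h2 : ((k:ℝ) + 1) * s = (k : ℝ) * s + s := by ring
      push_cast
      rw [h2, dadd _ s (by positivity) hs, ih s hs]; ring
  intro s hs
  have hzero : d s = 0 := by
    by_contra hne
    have hpos : 0 < |d s| := abs_pos.mpr hne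
    obtain ⟨k, hk⟩ := exists_nat_gt ((M + |c|) / |d s|)
    obtain ⟨m, hm⟩ := exists_nat_gt ((k : ℝ) * s)
    have hb1 : |d (k * s)| ≤ M + |c| := dbd m ((k:ℝ) * s) (by positivity) (by linarith)
    rw [dmul k s hs, abs_mul, Nat.abs_cast] at hb1
    have hlt : (M + |c|) / |d s| * |d s| < k * |d s| :=
      mul_lt_mul_of_pos_right hk hpos
    rw [div_mul_cancel₀ _ (ne_of_gt hpos)] at hlt
    linarith
  have : h s - s * c = 0 := hzero
  linarith

lemma icc_union_split {n : ℕ} (a b : Fin n → ℝ) (i : Fin n) {s : ℝ}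
    (has : a i ≤ s) (hsb : s ≤ b i) :
    Set.Icc a (Function.update b i s) ∪ Set.Icc (Function.update a i s) b = Set.Icc a b := by
  ext x
  simp only [Set.mem_union, Set.mem_Icc, Pi.le_def, Function.update_apply]
  constructor
  · rintro (⟨h1, h2⟩ | ⟨h1, h2⟩)
    · refine ⟨h1, fun j => ?_⟩
      have hx := h2 j
      by_cases hj : j = i
      · subst hj; simp only [if_pos rfl] at hx; exact hx.trans hsb
      · simpa [hj] using hx
    · refine ⟨fun j => ?_, h2⟩
      have hx := h1 j
      by_cases hj : j = i
      · subst hj; simp only [if_pos rfl] at hx; exact has.trans hx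
      · simpa [hj] using hx
  · rintro ⟨h1, h2⟩
    by_cases hx : x i ≤ s
    · left
      refine ⟨h1, fun j => ?_⟩
      by_cases hj : j = i
      · subst hj; simpa using hx
      · simpa [hj] using h2 j
    · right
      refine ⟨fun j => ?_, h2⟩
      by_cases hj : j = i
      · subst hj; rw [if_pos rfl]; linarith
      · simpa [hj] using h1 j

lemma icc_inter_split {n : ℕ} (a b : Fin n → ℝ) (i : Fin n) {s : ℝ}
    (has : a i ≤ s) (hsb : s ≤ b i) :
    Set.Icc a (Function.update b i s) ∩ Set.Icc (Function.update a i s) b =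
      Set.Icc (Function.update a i s) (Function.update b i s) := by
  ext x
  simp only [Set.mem_inter_iff, Set.mem_Icc, Pi.le_def, Function.update_apply]
  constructor
  · rintro ⟨⟨_, h2⟩, ⟨h3, _⟩⟩
    exact ⟨h3, h2⟩
  · rintro ⟨h1, h2⟩
    refine ⟨⟨fun j => ?_, h2⟩, ⟨h1, fun j => ?_⟩⟩
    · have hx := h1 j
      by_cases hj : j = i
      · subst hj; simp only [if_pos rfl] at hx; exact has.trans hx
      · simpa [hj] using hx
    · have hx := h2 j
      by_cases hj : j = i
      · subst hj; simp only [if_pos rfl] at hx; exact hx.trans hsb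
      · simpa [hj] using hx

end aux

section main
variable {n : ℕ} {V : Set (Fin n → ℝ) → ℝ}

lemma upd_sub (t : Fin n → ℝ) (i : Fin n) (x y : ℝ) :
    Function.update t i x - Function.update (0 : Fin n → ℝ) i y = Function.update t i (x - y) := by
  funext j
  by_cases hj : j = i
  · subst hj; simp
  · simp [Function.update_apply, hj]

lemma upd_nonneg {t : Fin n → ℝ} (ht : (0 : Fin n → ℝ) ≤ t) {i : Fin n} {x : ℝ} (hx : 0 ≤ x) :
    (0 : Fin n → ℝ) ≤ Function.update t i x := by
  intro j
  by_cases hj : j = i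
  · subst hj; simpa using hx
  · simpa [Function.update_apply, hj] using ht j

lemma f_trans
    (htrans : ∀ (S : Set (Fin n → ℝ)) (x : Fin n → ℝ),
      IsBox S → V ((fun p => p + x) '' S) = V S)
    (a b : Fin n → ℝ) (hab : a ≤ b) :
    V (Set.Icc a b) = V (Set.Icc 0 (b - a)) := by
  have h0 : (0 : Fin n → ℝ) ≤ b - a := sub_nonneg.mpr hab
  have him : (fun p => p + a) '' Set.Icc (0 : Fin n → ℝ) (b - a) = Set.Icc a b := by
    rw [Set.image_add_const_Icc]
    simp
  rw [← him, htrans _ a ⟨0, b - a, h0, rfl⟩]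

lemma keyE
    (hval : ∀ K L : Set (Fin n → ℝ), IsBox K → IsBox L → IsBox (K ∪ L) →
      V (K ∪ L) + V (K ∩ L) = V K + V L)
    (htrans : ∀ (S : Set (Fin n → ℝ)) (x : Fin n → ℝ),
      IsBox S → V ((fun p => p + x) '' S) = V S)
    (t : Fin n → ℝ) (ht : (0 : Fin n → ℝ) ≤ t) (i : Fin n) (s u : ℝ) (hs : 0 ≤ s) (hu : 0 ≤ u) :
    V (Set.Icc 0 (Function.update t i (s + u))) + V (Set.Icc 0 (Function.update t i 0))
      = V (Set.Icc 0 (Function.update t i s)) + V (Set.Icc 0 (Function.update t i u)) := by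
  set b : Fin n → ℝ := Function.update t i (s + u) with hb
  have hbi : b i = s + u := by simp [hb]
  have h0b : (0 : Fin n → ℝ) ≤ b := upd_nonneg ht (by positivity)
  have hubs : Function.update b i s = Function.update t i s := by simp [hb]
  have hKle : (0 : Fin n → ℝ) ≤ Function.update b i s := by
    rw [hubs]; exact upd_nonneg ht hs
  have hLle : Function.update (0 : Fin n → ℝ) i s ≤ b := by
    intro j
    by_cases hj : j = i
    · subst hj; simp [hb]; linarith
    · simpa [Function.update_apply, hj, hb] using ht j
  have h0i : (0 : Fin n → ℝ) i ≤ s := by simpa using hs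
  have hsbi : s ≤ b i := by rw [hbi]; linarith
  have hunion := icc_union_split (0 : Fin n → ℝ) b i h0i hsbi
  have hinter := icc_inter_split (0 : Fin n → ℝ) b i h0i hsbi
  have hUbox : IsBox (Set.Icc (0 : Fin n → ℝ) (Function.update b i s) ∪
      Set.Icc (Function.update (0 : Fin n → ℝ) i s) b) := by
    rw [hunion]; exact ⟨_, _, h0b, rfl⟩
  have H := hval _ _ ⟨_, _, hKle, rfl⟩ ⟨_, _, hLle, rfl⟩ hUbox
  rw [hunion, hinter, hubs] at H
  have hVL : V (Set.Icc (Function.update (0 : Fin n → ℝ) i s) b)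
      = V (Set.Icc 0 (Function.update t i u)) := by
    rw [f_trans htrans _ _ hLle, hb, upd_sub]
    ring_nf
  have hVI : V (Set.Icc (Function.update (0 : Fin n → ℝ) i s) (Function.update t i s))
      = V (Set.Icc 0 (Function.update t i 0)) := by
    have hle : Function.update (0 : Fin n → ℝ) i s ≤ Function.update t i s := by
      intro j
      by_cases hj : j = i
      · subst hj; simp
      · simpa [Function.update_apply, hj] using ht j
    rw [f_trans htrans _ _ hle, upd_sub]
    ring_nf
  rw [hVL, hVI] at H
  linarith

lemma bound_small
    (hbdd : ∃ M : ℝ, ∀ a b : Fin n → ℝ, a ≤ b →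
      (∀ x ∈ Set.Icc a b, ∑ i, (x i) ^ 2 ≤ 1) → |V (Set.Icc a b)| ≤ M) :
    ∃ M : ℝ, ∀ t : Fin n → ℝ, (0 : Fin n → ℝ) ≤ t → (∀ i, t i ≤ ((n : ℝ) + 1)⁻¹) →
      |V (Set.Icc 0 t)| ≤ M := by
  obtain ⟨M, hM⟩ := hbdd
  refine ⟨M, fun t ht hti => ?_⟩
  refine hM 0 t ht fun x hx => ?_
  obtain ⟨hx0, hxt⟩ := Set.mem_Icc.mp hx
  have hd : (0:ℝ) < (n : ℝ) + 1 := by positivity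
  have hstep : ∀ i : Fin n, (x i) ^ 2 ≤ (((n : ℝ) + 1)⁻¹) ^ 2 := by
    intro i
    have h1 : 0 ≤ x i := hx0 i
    have h2 : x i ≤ ((n : ℝ) + 1)⁻¹ := (hxt i).trans (hti i)
    nlinarith
  calc ∑ i, (x i) ^ 2 ≤ ∑ _i : Fin n, (((n : ℝ) + 1)⁻¹) ^ 2 :=
        Finset.sum_le_sum fun i _ => hstep i
    _ = (n : ℝ) * (((n : ℝ) + 1)⁻¹) ^ 2 := by
        simp [Finset.sum_const, mul_comm]
    _ ≤ 1 := by
        rw [inv_pow, ← div_eq_mul_inv, div_le_one (by positivity)]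
        nlinarith [Nat.cast_nonneg (α := ℝ) n]

lemma doubling
    (hval : ∀ K L : Set (Fin n → ℝ), IsBox K → IsBox L → IsBox (K ∪ L) →
      V (K ∪ L) + V (K ∩ L) = V K + V L)
    (htrans : ∀ (S : Set (Fin n → ℝ)) (x : Fin n → ℝ),
      IsBox S → V ((fun p => p + x) '' S) = V S)
    (c M : ℝ) (hc : 0 < c)
    (hM : ∀ t : Fin n → ℝ, (0 : Fin n → ℝ) ≤ t → (∀ i, t i ≤ c) → |V (Set.Icc 0 t)| ≤ M) :
    ∀ t : Fin n → ℝ, (0 : Fin n → ℝ) ≤ t → (∀ i, t i ≤ 2 * c) →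
      |V (Set.Icc 0 t)| ≤ 3 ^ n * M := by
  have hM0 : 0 ≤ M := (abs_nonneg _).trans (hM 0 le_rfl fun i => by simp; linarith)
  have claim : ∀ k : ℕ, ∀ t : Fin n → ℝ, (0 : Fin n → ℝ) ≤ t →
      (∀ i : Fin n, (i : ℕ) < k → t i ≤ 2 * c) → (∀ i : Fin n, k ≤ (i : ℕ) → t i ≤ c) →
      |V (Set.Icc 0 t)| ≤ 3 ^ k * M := by
    intro k
    induction k with
    | zero =>
      intro t ht _ hc2
      simpa using hM t ht fun i => hc2 i (Nat.zero_le _)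
    | succ k ih =>
      intro t ht h2c hc1
      by_cases hk : k < n
      · set K : Fin n := ⟨k, hk⟩ with hK
        set s : ℝ := min (t K) c with hsdef
        set u : ℝ := t K - s with hudef
        have htK : 0 ≤ t K := ht K
        have hs0 : 0 ≤ s := le_min htK hc.le
        have hsc : s ≤ c := min_le_right _ _
        have hu0 : 0 ≤ u := by simp only [hudef]; have := min_le_left (t K) c; linarith
        have htK2 : t K ≤ 2 * c := h2c K (by simp [hK])
        have huc : u ≤ c := by
          rcases le_total (t K) c with h | h
          · simp only [hudef, hsdef, min_eq_left h]; linarith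
          · simp only [hudef, hsdef, min_eq_right h]; linarith
        have hsu : s + u = t K := by simp only [hudef]; ring
        have E := keyE hval htrans t ht K s u hs0 hu0
        rw [hsu, Function.update_eq_self] at E
        have happly : ∀ x : ℝ, 0 ≤ x → x ≤ c →
            |V (Set.Icc 0 (Function.update t K x))| ≤ 3 ^ k * M := by
          intro x hx0 hxc
          refine ih _ (upd_nonneg ht hx0) (fun j hj => ?_) (fun j hj => ?_)
          · have hjK : j ≠ K := by
              intro h; subst h; simp [hK] at hj
            rw [Function.update_apply, if_neg hjK]
            exact h2c j (by omega)
          · by_cases hjK : j = K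
            · subst hjK; simpa using hxc
            · rw [Function.update_apply, if_neg hjK]
              refine hc1 j ?_
              have : (j : ℕ) ≠ k := fun h => hjK (Fin.ext h)
              omega
        have b1 := happly s hs0 hsc
        have b2 := happly u hu0 huc
        have b3 := happly 0 le_rfl hc.le
        have h3 : (3:ℝ) ^ (k+1) * M = 3 ^ k * M + 3 ^ k * M + 3 ^ k * M := by ring
        rw [h3]
        have hVt : V (Set.Icc 0 t) = V (Set.Icc 0 (Function.update t K s))
            + V (Set.Icc 0 (Function.update t K u)) - V (Set.Icc 0 (Function.update t K 0)) := by
          linarith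
        rw [hVt]
        refine le_trans (abs_sub _ _) ?_
        exact add_le_add (le_trans (abs_add_le _ _) (add_le_add b1 b2)) b3
      · have h3le : (3:ℝ) ^ k * M ≤ 3 ^ (k+1) * M := by
          have : (3:ℝ) ^ k ≤ 3 ^ (k+1) := pow_le_pow_right₀ (by norm_num) (Nat.le_succ k)
          nlinarith
        refine le_trans (ih t ht (fun i hi => h2c i (by omega)) (fun i hi => ?_)) h3le
        exact absurd (lt_of_lt_of_le i.isLt (Nat.not_lt.mp hk)) (by omega)
  intro t ht h2c
  exact claim n t ht (fun i _ => h2c i) (fun i hi => absurd i.isLt (by omega))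

lemma bddR
    (hval : ∀ K L : Set (Fin n → ℝ), IsBox K → IsBox L → IsBox (K ∪ L) →
      V (K ∪ L) + V (K ∩ L) = V K + V L)
    (htrans : ∀ (S : Set (Fin n → ℝ)) (x : Fin n → ℝ),
      IsBox S → V ((fun p => p + x) '' S) = V S)
    (hbdd : ∃ M : ℝ, ∀ a b : Fin n → ℝ, a ≤ b →
      (∀ x ∈ Set.Icc a b, ∑ i, (x i) ^ 2 ≤ 1) → |V (Set.Icc a b)| ≤ M)
    (R : ℝ) :
    ∃ M : ℝ, 0 ≤ M ∧ ∀ t : Fin n → ℝ, (0 : Fin n → ℝ) ≤ t → (∀ i, t i ≤ R) →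
      |V (Set.Icc 0 t)| ≤ M := by
  set δ : ℝ := ((n : ℝ) + 1)⁻¹ with hδ
  have hδ0 : 0 < δ := by positivity
  have claim : ∀ m : ℕ, ∃ M : ℝ, ∀ t : Fin n → ℝ, (0 : Fin n → ℝ) ≤ t →
      (∀ i, t i ≤ 2 ^ m * δ) → |V (Set.Icc 0 t)| ≤ M := by
    intro m
    induction m with
    | zero =>
      obtain ⟨M, hM⟩ := bound_small (V := V) hbdd
      exact ⟨M, fun t ht hti => hM t ht fun i => by simpa using hti i⟩
    | succ m ih =>
      obtain ⟨M, hM⟩ := ih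
      refine ⟨3 ^ n * M, fun t ht hti => ?_⟩
      refine doubling hval htrans (2 ^ m * δ) M (by positivity) hM t ht fun i => ?_
      calc t i ≤ 2 ^ (m + 1) * δ := hti i
        _ = 2 * (2 ^ m * δ) := by ring
  obtain ⟨m, hm⟩ := exists_nat_gt (R / δ)
  have h2m : (m : ℝ) < 2 ^ m := by exact_mod_cast (Nat.lt_two_pow_self (n := m))
  have hR : R ≤ 2 ^ m * δ := by
    have h1 : R / δ < 2 ^ m := lt_trans hm h2m
    calc R = R / δ * δ := by field_simp
      _ ≤ 2 ^ m * δ := by nlinarith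
  obtain ⟨M, hM⟩ := claim m
  refine ⟨M, ?_, fun t ht hti => hM t ht fun i => (hti i).trans hR⟩
  exact (abs_nonneg _).trans (hM 0 le_rfl fun i => by simp; positivity)

lemma sect
    (hval : ∀ K L : Set (Fin n → ℝ), IsBox K → IsBox L → IsBox (K ∪ L) →
      V (K ∪ L) + V (K ∩ L) = V K + V L)
    (htrans : ∀ (S : Set (Fin n → ℝ)) (x : Fin n → ℝ),
      IsBox S → V ((fun p => p + x) '' S) = V S)
    (hbdd : ∃ M : ℝ, ∀ a b : Fin n → ℝ, a ≤ b →
      (∀ x ∈ Set.Icc a b, ∑ i, (x i) ^ 2 ≤ 1) → |V (Set.Icc a b)| ≤ M)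
    (t : Fin n → ℝ) (ht : (0 : Fin n → ℝ) ≤ t) (i : Fin n) (x : ℝ) (hx : 0 ≤ x) :
    V (Set.Icc 0 (Function.update t i x)) = V (Set.Icc 0 (Function.update t i 0))
      + x * (V (Set.Icc 0 (Function.update t i 1)) - V (Set.Icc 0 (Function.update t i 0))) := by
  obtain ⟨M, hM0, hM⟩ := bddR hval htrans hbdd (1 + ∑ j, t j)
  set h : ℝ → ℝ := fun y => V (Set.Icc 0 (Function.update t i y))
    - V (Set.Icc 0 (Function.update t i 0)) with hh
  have hadd : ∀ s u : ℝ, 0 ≤ s → 0 ≤ u → h (s + u) = h s + h u := by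
    intro s u hs hu
    have := keyE hval htrans t ht i s u hs hu
    simp only [hh]; linarith
  have hbound : ∀ s : ℝ, 0 ≤ s → s ≤ 1 → |h s| ≤ 2 * M := by
    intro s hs hs1
    have key : ∀ y : ℝ, 0 ≤ y → y ≤ 1 → |V (Set.Icc 0 (Function.update t i y))| ≤ M := by
      intro y hy hy1
      refine hM _ (upd_nonneg ht hy) fun j => ?_
      have hsum : t j ≤ ∑ j, t j := Finset.single_le_sum (fun j _ => ht j) (Finset.mem_univ j)
      have hsum0 : 0 ≤ ∑ j, t j := Finset.sum_nonneg fun j _ => ht j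
      by_cases hj : j = i
      · subst hj; simp only [Function.update_self]; linarith
      · rw [Function.update_apply, if_neg hj]; linarith
    have k1 := key s hs hs1
    have k2 := key 0 le_rfl zero_le_one
    simp only [hh]
    refine le_trans (abs_sub _ _) (by linarith)
  have hc := cauchy_lin h hadd (2 * M) hbound x hx
  simp only [hh] at hc
  linarith

lemma lip
    (hval : ∀ K L : Set (Fin n → ℝ), IsBox K → IsBox L → IsBox (K ∪ L) →
      V (K ∪ L) + V (K ∩ L) = V K + V L)
    (htrans : ∀ (S : Set (Fin n → ℝ)) (x : Fin n → ℝ),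
      IsBox S → V ((fun p => p + x) '' S) = V S)
    (hbdd : ∃ M : ℝ, ∀ a b : Fin n → ℝ, a ≤ b →
      (∀ x ∈ Set.Icc a b, ∑ i, (x i) ^ 2 ≤ 1) → |V (Set.Icc a b)| ≤ M)
    (R M : ℝ) (hR1 : 1 ≤ R)
    (hM : ∀ u : Fin n → ℝ, (0 : Fin n → ℝ) ≤ u → (∀ i, u i ≤ R) → |V (Set.Icc 0 u)| ≤ M) :
    ∀ k : ℕ, ∀ s t : Fin n → ℝ, (0 : Fin n → ℝ) ≤ s → (0 : Fin n → ℝ) ≤ t →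
      (∀ i, s i ≤ R) → (∀ i, t i ≤ R) → (∀ i : Fin n, k ≤ (i : ℕ) → s i = t i) →
      |V (Set.Icc 0 s) - V (Set.Icc 0 t)| ≤
        (∑ i ∈ Finset.univ.filter (fun i : Fin n => (i : ℕ) < k), |s i - t i|) * (2 * M) := by
  intro k
  induction k with
  | zero =>
    intro s t hs ht hsR htR hagree
    have hst : s = t := funext fun i => hagree i (Nat.zero_le _)
    subst hst
    simp
  | succ k ih =>
    intro s t hs ht hsR htR hagree
    by_cases hk : k < n
    · set K : Fin n := ⟨k, hk⟩ with hK
      set s' := Function.update s K (t K) with hs'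
      have hcbd : |V (Set.Icc 0 (Function.update s K 1))
          - V (Set.Icc 0 (Function.update s K 0))| ≤ 2 * M := by
        have b1 : |V (Set.Icc 0 (Function.update s K 1))| ≤ M := by
          refine hM _ (upd_nonneg hs zero_le_one) fun j => ?_
          by_cases hj : j = K
          · subst hj; simpa using hR1
          · rw [Function.update_apply, if_neg hj]; exact hsR j
        have b0 : |V (Set.Icc 0 (Function.update s K 0))| ≤ M := by
          refine hM _ (upd_nonneg hs le_rfl) fun j => ?_
          by_cases hj : j = K
          · subst hj; simp only [Function.update_self]; linarith
          · rw [Function.update_apply, if_neg hj]; exact hsR j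
        exact le_trans (abs_sub _ _) (by linarith)
      have e1 := sect hval htrans hbdd s hs K (s K) (hs K)
      rw [Function.update_eq_self] at e1
      have e2 := sect hval htrans hbdd s hs K (t K) (ht K)
      have hdiff : V (Set.Icc 0 s) - V (Set.Icc 0 s') = (s K - t K) *
          (V (Set.Icc 0 (Function.update s K 1)) - V (Set.Icc 0 (Function.update s K 0))) := by
        rw [hs']
        linear_combination e1 - e2
      have ihh : |V (Set.Icc 0 s') - V (Set.Icc 0 t)| ≤
          (∑ i ∈ Finset.univ.filter (fun i : Fin n => (i : ℕ) < k), |s' i - t i|) * (2 * M) := by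
        refine ih s' t (upd_nonneg hs (ht K)) ht (fun j => ?_) htR (fun j hj => ?_)
        · by_cases hj : j = K
          · subst hj; simp only [hs', Function.update_self]; exact htR _
          · rw [hs', Function.update_apply, if_neg hj]; exact hsR j
        · by_cases hjK : j = K
          · subst hjK; simp [hs']
          · rw [hs', Function.update_apply, if_neg hjK]
            refine hagree j ?_
            have : (j : ℕ) ≠ k := fun h => hjK (Fin.ext h)
            omega
      have hsum_eq : (∑ i ∈ Finset.univ.filter (fun i : Fin n => (i : ℕ) < k), |s' i - t i|)
          = ∑ i ∈ Finset.univ.filter (fun i : Fin n => (i : ℕ) < k), |s i - t i| := by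
        refine Finset.sum_congr rfl fun j hj => ?_
        simp only [Finset.mem_filter] at hj
        have hjK : j ≠ K := by
          intro h; subst h; simp [hK] at hj
        rw [hs', Function.update_apply, if_neg hjK]
      have hKnot : K ∉ Finset.univ.filter (fun i : Fin n => (i : ℕ) < k) := by
        simp [hK]
      have hfilter : Finset.univ.filter (fun i : Fin n => (i : ℕ) < k + 1)
          = insert K (Finset.univ.filter (fun i : Fin n => (i : ℕ) < k)) := by
        ext j
        simp only [Finset.mem_filter, Finset.mem_insert, Finset.mem_univ, true_and, Fin.ext_iff, hK]
        omega
      have h1 : |V (Set.Icc 0 s) - V (Set.Icc 0 s')| ≤ |s K - t K| * (2 * M) := by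
        rw [hdiff, abs_mul]
        exact mul_le_mul_of_nonneg_left hcbd (abs_nonneg _)
      calc |V (Set.Icc 0 s) - V (Set.Icc 0 t)|
          ≤ |V (Set.Icc 0 s) - V (Set.Icc 0 s')| + |V (Set.Icc 0 s') - V (Set.Icc 0 t)| := by
            have := abs_sub_abs_le_abs_sub (V (Set.Icc 0 s)) (V (Set.Icc 0 s'))
            exact abs_sub_le _ _ _
        _ ≤ |s K - t K| * (2 * M) + (∑ i ∈ Finset.univ.filter (fun i : Fin n => (i : ℕ) < k),
              |s i - t i|) * (2 * M) := by
            rw [← hsum_eq]; exact add_le_add h1 ihh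
        _ = (∑ i ∈ Finset.univ.filter (fun i : Fin n => (i : ℕ) < k + 1), |s i - t i|) * (2 * M) := by
            rw [hfilter, Finset.sum_insert hKnot]; ring
    · have hfeq : Finset.univ.filter (fun i : Fin n => (i : ℕ) < k)
          = Finset.univ.filter (fun i : Fin n => (i : ℕ) < k + 1) := by
        ext j
        have := j.isLt
        simp only [Finset.mem_filter, Finset.mem_univ, true_and]
        omega
      rw [← hfeq]
      refine ih s t hs ht hsR htR fun i hi => ?_
      exact absurd (lt_of_lt_of_le i.isLt (Nat.not_lt.mp hk)) (by omega)

end main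

lemma coord_upper {n : ℕ} (c d c' d' : Fin n → ℝ) (h1 : c ≤ d) (h2 : c' ≤ d') (i : Fin n) :
    d i - d' i ≤ Metric.hausdorffDist (Set.Icc c d) (Set.Icc c' d') := by
  have hfin : EMetric.hausdorffEdist (Set.Icc c d) (Set.Icc c' d') ≠ ⊤ :=
    Metric.hausdorffEdist_ne_top_of_nonempty_of_bounded (Set.nonempty_Icc.mpr h1)
      (Set.nonempty_Icc.mpr h2) isCompact_Icc.isBounded isCompact_Icc.isBounded
  have hin : Metric.infDist d (Set.Icc c' d') ≤
      Metric.hausdorffDist (Set.Icc c d) (Set.Icc c' d') :=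
    Metric.infDist_le_hausdorffDist_of_mem (Set.mem_Icc.mpr ⟨h1, le_rfl⟩) hfin
  refine le_trans (le_of_not_gt fun hlt => ?_) hin
  obtain ⟨y, hy, hdy⟩ := (Metric.infDist_lt_iff (Set.nonempty_Icc.mpr h2)).mp hlt
  obtain ⟨_, hy2⟩ := Set.mem_Icc.mp hy
  have hpi : dist (d i) (y i) ≤ dist d y := dist_le_pi_dist d y i
  have habs : d i - y i ≤ dist (d i) (y i) := by
    rw [Real.dist_eq]; exact le_abs_self _
  have : d i - d' i ≤ dist d y := by
    have := hy2 i
    linarith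
  linarith

lemma coord_lower {n : ℕ} (c d c' d' : Fin n → ℝ) (h1 : c ≤ d) (h2 : c' ≤ d') (i : Fin n) :
    c' i - c i ≤ Metric.hausdorffDist (Set.Icc c d) (Set.Icc c' d') := by
  have hfin : EMetric.hausdorffEdist (Set.Icc c d) (Set.Icc c' d') ≠ ⊤ :=
    Metric.hausdorffEdist_ne_top_of_nonempty_of_bounded (Set.nonempty_Icc.mpr h1)
      (Set.nonempty_Icc.mpr h2) isCompact_Icc.isBounded isCompact_Icc.isBounded
  have hin : Metric.infDist c (Set.Icc c' d') ≤
      Metric.hausdorffDist (Set.Icc c d) (Set.Icc c' d') :=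
    Metric.infDist_le_hausdorffDist_of_mem (Set.mem_Icc.mpr ⟨le_rfl, h1⟩) hfin
  refine le_trans (le_of_not_gt fun hlt => ?_) hin
  obtain ⟨y, hy, hdy⟩ := (Metric.infDist_lt_iff (Set.nonempty_Icc.mpr h2)).mp hlt
  obtain ⟨hy1, _⟩ := Set.mem_Icc.mp hy
  have hpi : dist (c i) (y i) ≤ dist c y := dist_le_pi_dist c y i
  have habs : y i - c i ≤ dist (c i) (y i) := by
    rw [Real.dist_eq, abs_sub_comm]; exact le_abs_self _
  have : c' i - c i ≤ dist c y := by
    have := hy1 i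
    linarith
  linarith

theorem bounded_valuation_on_boxes_continuous (n : ℕ) (V : Set (Fin n → ℝ) → ℝ)
    (hval : ∀ K L : Set (Fin n → ℝ), IsBox K → IsBox L → IsBox (K ∪ L) →
      V (K ∪ L) + V (K ∩ L) = V K + V L)
    (htrans : ∀ (S : Set (Fin n → ℝ)) (x : Fin n → ℝ),
      IsBox S → V ((fun p => p + x) '' S) = V S)
    (hbdd : ∃ M : ℝ, ∀ a b : Fin n → ℝ, a ≤ b →
      (∀ x ∈ Set.Icc a b, ∑ i, (x i) ^ 2 ≤ 1) → |V (Set.Icc a b)| ≤ M) :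
    ∀ (a b : ℕ → Fin n → ℝ) (a₀ b₀ : Fin n → ℝ),
      (∀ j, a j ≤ b j) → a₀ ≤ b₀ →
      Tendsto (fun j => Metric.hausdorffDist (Set.Icc (a j) (b j)) (Set.Icc a₀ b₀))
        atTop (nhds 0) →
      Tendsto (fun j => V (Set.Icc (a j) (b j))) atTop (nhds (V (Set.Icc a₀ b₀))) := by
  intro a b a₀ b₀ hab hab₀ hH
  set H : ℕ → ℝ := fun j => Metric.hausdorffDist (Set.Icc (a j) (b j)) (Set.Icc a₀ b₀) with hHdef
  -- coordinate convergence
  have hta : ∀ i, Tendsto (fun j => a j i) atTop (nhds (a₀ i)) := by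
    intro i
    rw [tendsto_iff_dist_tendsto_zero]
    refine squeeze_zero (fun j => dist_nonneg) (fun j => ?_) hH
    rw [Real.dist_eq, abs_sub_le_iff]
    constructor
    · have := coord_lower a₀ b₀ (a j) (b j) hab₀ (hab j) i
      rwa [Metric.hausdorffDist_comm] at this
    · exact coord_lower (a j) (b j) a₀ b₀ (hab j) hab₀ i
  have htb : ∀ i, Tendsto (fun j => b j i) atTop (nhds (b₀ i)) := by
    intro i
    rw [tendsto_iff_dist_tendsto_zero]
    refine squeeze_zero (fun j => dist_nonneg) (fun j => ?_) hH
    rw [Real.dist_eq, abs_sub_le_iff]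
    constructor
    · exact coord_upper (a j) (b j) a₀ b₀ (hab j) hab₀ i
    · have := coord_upper a₀ b₀ (a j) (b j) hab₀ (hab j) i
      rwa [Metric.hausdorffDist_comm] at this
  -- setup bounds
  set T : ℝ := ∑ i, (b₀ i - a₀ i) with hT
  have hT0 : 0 ≤ T := Finset.sum_nonneg fun i _ => sub_nonneg.mpr (hab₀ i)
  have hTi : ∀ i, b₀ i - a₀ i ≤ T :=
    fun i => Finset.single_le_sum (fun i _ => sub_nonneg.mpr (hab₀ i)) (Finset.mem_univ i)
  set R : ℝ := T + 2 with hR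
  have hR1 : 1 ≤ R := by linarith
  obtain ⟨M, hM0, hM⟩ := bddR hval htrans hbdd R
  have hfilter : Finset.univ.filter (fun i : Fin n => (i : ℕ) < n) = Finset.univ :=
    Finset.filter_true_of_mem fun i _ => i.isLt
  have hev : ∀ᶠ j in atTop, ∀ i, b j i - a j i ≤ R := by
    rw [eventually_all]
    intro i
    have hlt : b₀ i - a₀ i < R := by have := hTi i; linarith
    exact ((htb i).sub (hta i)).eventually (eventually_le_nhds hlt)
  have hmain : ∀ᶠ j in atTop, |V (Set.Icc 0 (b j - a j)) - V (Set.Icc 0 (b₀ - a₀))| ≤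
      (∑ i, |b j i - a j i - (b₀ i - a₀ i)|) * (2 * M) := by
    filter_upwards [hev] with j hj
    have := lip hval htrans hbdd R M hR1 hM n (b j - a j) (b₀ - a₀)
      (sub_nonneg.mpr (hab j)) (sub_nonneg.mpr hab₀)
      (fun i => hj i) (fun i => by have := hTi i; simp only [Pi.sub_apply]; linarith)
      (fun i hi => absurd i.isLt (by omega))
    rwa [hfilter] at this
  have hRHS : Tendsto (fun j => (∑ i, |b j i - a j i - (b₀ i - a₀ i)|) * (2 * M))
      atTop (nhds 0) := by
    have hsum : Tendsto (fun j => ∑ i, |b j i - a j i - (b₀ i - a₀ i)|) atTop (nhds 0) := by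
      have : Tendsto (fun j => ∑ i, |b j i - a j i - (b₀ i - a₀ i)|) atTop
          (nhds (∑ _i : Fin n, |(0:ℝ)|)) := by
        refine tendsto_finset_sum _ fun i _ => ?_
        have h1 : Tendsto (fun j => b j i - a j i - (b₀ i - a₀ i)) atTop (nhds 0) := by
          have := ((htb i).sub (hta i)).sub_const (b₀ i - a₀ i)
          simpa using this
        simpa using h1.abs
      simpa using this
    have := hsum.mul_const (2 * M)
    simpa using this
  rw [tendsto_iff_dist_tendsto_zero]
  have hrw : (fun j => dist (V (Set.Icc (a j) (b j))) (V (Set.Icc a₀ b₀)))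
      = fun j => |V (Set.Icc 0 (b j - a j)) - V (Set.Icc 0 (b₀ - a₀))| := by
    funext j
    rw [Real.dist_eq, f_trans htrans (a j) (b j) (hab j), f_trans htrans a₀ b₀ hab₀]
  rw [hrw]
  exact squeeze_zero' (Eventually.of_forall fun j => abs_nonneg _) hmain hRHS
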